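/- Let f be an entropy generator, let g : [0,−f'(0)) × [0,−f'(0)) → ℝ satisfy H_f(P⊗Q) = g(H_f(P), H_f(Q)) for all probability distributions P, Q on ℕ, and let 0 < a < b < −f'(0). Fix N, q̃_1, q̃_2 with 0 < q̃_1 < q̃_2 < 1 such that every value in [a,b] is attained as H_f of a distribution on {1,…,N} with first two coordinates q̃_1, q̃_2. Then for every x, y ∈ (a,b) and every probability distribution P = (p_1,…,p_N) on {1,…,N} with H_f(P) = x, the partial derivative ∂g/∂y exists at (x,y) and equals (f'(q̃_1) − f'(q̃_2))^{−1} · ∑_{i=1}^N p_i·(f'(p_i·q̃_1) − f'(p_i·q̃_2)); in particular, ∂g/∂y at (x,y) depends only on x and not on y. -/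

import Mathlib

open Filter Set Topology

/-- A probability distribution on ℕ: nonnegative weights summing to 1. -/
def IsProbDist (p : ℕ → ℝ) : Prop := (∀ i, 0 ≤ p i) ∧ HasSum p 1

/-- An entropy generator: real analytic on `[0,∞)`, strictly convex on `[0,∞)`,
with `f 0 = f 1 = 0` and `f' 1 = 1`. -/
def IsEntropyGenerator (f : ℝ → ℝ) : Prop :=
  (∀ x ∈ Set.Ici (0 : ℝ), AnalyticAt ℝ f x) ∧
  StrictConvexOn ℝ (Set.Ici (0 : ℝ)) f ∧
  f 0 = 0 ∧ f 1 = 0 ∧ deriv f 1 = 1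

theorem stmt12 (f : ℝ → ℝ) (hf : IsEntropyGenerator f)
    (g : ℝ → ℝ → ℝ)
    (hg : ∀ p q : ℕ → ℝ, IsProbDist p → IsProbDist q →
      (-∑' ij : ℕ × ℕ, f (p ij.1 * q ij.2)) =
        g (-∑' i, f (p i)) (-∑' j, f (q j)))
    (a b : ℝ) (ha : 0 < a) (hab : a < b) (hb : b < -deriv f 0)
    (N : ℕ) (q₁ q₂ : ℝ) (hq₁ : 0 < q₁) (hq₁₂ : q₁ < q₂) (hq₂ : q₂ < 1)
    (hattain : ∀ c ∈ Set.Icc a b, ∃ Q : ℕ → ℝ, IsProbDist Q ∧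
      (∀ i, N ≤ i → Q i = 0) ∧ Q 0 = q₁ ∧ Q 1 = q₂ ∧ (-∑' i, f (Q i)) = c) :
    ∀ x ∈ Set.Ioo a b, ∀ y ∈ Set.Ioo a b,
      ∀ P : ℕ → ℝ, IsProbDist P → (∀ i, N ≤ i → P i = 0) →
        (-∑' i, f (P i)) = x →
        HasDerivAt (fun t => g x t)
          ((deriv f q₁ - deriv f q₂)⁻¹ *
            ∑ i ∈ Finset.range N, P i * (deriv f (P i * q₁) - deriv f (P i * q₂))) y := by
  obtain ⟨hfa, hfc, hf0, hf1, _⟩ := hf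
  intro x hx y hy P hP hPN hPx
  obtain ⟨Q, hQ, hQN, hQ0, hQ1, hQy⟩ := hattain y ⟨hy.1.le, hy.2.le⟩
  have hq2pos : (0:ℝ) < q₂ := hq₁.trans hq₁₂
  have hN2 : 2 ≤ N := by
    by_contra h
    push_neg at h
    have h1 := hQN 1 (by omega)
    rw [hQ1] at h1; linarith
  -- the direction of perturbation
  set d : ℕ → ℝ := fun j => if j = 0 then 1 else if j = 1 then -1 else 0 with hd
  have hd0 : d 0 = 1 := rfl
  have hd1 : d 1 = -1 := rfl
  have hdge : ∀ j, 2 ≤ j → d j = 0 := by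
    intro j hj
    simp only [hd]
    rw [if_neg (by omega), if_neg (by omega)]
  -- strict differentiability of f on [0, ∞)
  have hfd : ∀ t : ℝ, 0 ≤ t → HasStrictDerivAt f (deriv f t) t := by
    intro t ht
    have h := (hfa t ht).hasStrictFDerivAt.hasStrictDerivAt
    rwa [fderiv_apply_one_eq_deriv] at h
  -- strict monotonicity of deriv f
  have hmono : deriv f q₁ < deriv f q₂ :=
    hfc.strictMonoOn_deriv (fun t ht => (hfa t ht).differentiableAt)
      (le_of_lt hq₁) (le_of_lt hq2pos) hq₁₂
  -- sums over range N of functions supported on {0, 1}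
  have hsub : ({0, 1} : Finset ℕ) ⊆ Finset.range N := by
    intro j hj
    simp only [Finset.mem_insert, Finset.mem_singleton] at hj
    rcases hj with rfl | rfl <;> simp only [Finset.mem_range] <;> omega
  have hpair : ∀ F : ℕ → ℝ, (∀ j, 2 ≤ j → F j = 0) →
      ∑ j ∈ Finset.range N, F j = F 0 + F 1 := by
    intro F hF
    rw [← Finset.sum_subset hsub (fun j _ hj => hF j (by
      simp only [Finset.mem_insert, Finset.mem_singleton] at hj; omega)),
      Finset.sum_pair (by norm_num : (0:ℕ) ≠ 1)]
  -- tsum to finite sum conversions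
  have eQ : ∀ ε : ℝ, ∑' j, f (Q j + ε * d j) = ∑ j ∈ Finset.range N, f (Q j + ε * d j) := by
    intro ε
    refine tsum_eq_sum fun j hj => ?_
    simp only [Finset.mem_range, not_lt] at hj
    rw [hQN j hj, hdge j (by omega), mul_zero, add_zero, hf0]
  have ePQ : ∀ ε : ℝ, ∑' ij : ℕ × ℕ, f (P ij.1 * (Q ij.2 + ε * d ij.2)) =
      ∑ i ∈ Finset.range N, ∑ j ∈ Finset.range N, f (P i * (Q j + ε * d j)) := by
    intro ε
    have h1 : ∑' ij : ℕ × ℕ, f (P ij.1 * (Q ij.2 + ε * d ij.2)) =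
        ∑ ij ∈ Finset.range N ×ˢ Finset.range N, f (P ij.1 * (Q ij.2 + ε * d ij.2)) := by
      refine tsum_eq_sum fun ij hij => ?_
      rw [Finset.mem_product] at hij
      push_neg at hij
      by_cases h1 : ij.1 ∈ Finset.range N
      · have h2 := hij h1
        simp only [Finset.mem_range, not_lt] at h2
        rw [hQN _ h2, hdge _ (by omega), mul_zero, add_zero, mul_zero, hf0]
      · simp only [Finset.mem_range, not_lt] at h1
        rw [hPN _ h1, zero_mul, hf0]
    rw [h1]
    exact Finset.sum_product (s := Finset.range N) (t := Finset.range N)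
      (f := fun ij : ℕ × ℕ => f (P ij.1 * (Q ij.2 + ε * d ij.2)))
  -- perturbed distribution is a probability distribution
  have hQε : ∀ ε ∈ Set.Ioo (-q₁) q₂, IsProbDist (fun j => Q j + ε * d j) := by
    intro ε hε
    constructor
    · intro j
      show (0:ℝ) ≤ Q j + ε * d j
      match j with
      | 0 => rw [hQ0, hd0]; linarith [hε.1]
      | 1 => rw [hQ1, hd1]; linarith [hε.2]
      | (k+2) => rw [hdge (k+2) (by omega), mul_zero, add_zero]; exact hQ.1 (k+2)
    · have h0 : HasSum (fun j => ε * d j) 0 := by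
        have h := hasSum_sum_of_ne_finset_zero
          (s := ({0,1} : Finset ℕ)) (f := fun j => ε * d j) (L := SummationFilter.unconditional ℕ)
          (fun j hj => by
            show ε * d j = 0
            rw [hdge j (by
              simp only [Finset.mem_insert, Finset.mem_singleton] at hj; omega), mul_zero])
        have hsum : ∑ j ∈ ({0,1} : Finset ℕ), ε * d j = 0 := by
          rw [Finset.sum_pair (by norm_num : (0:ℕ) ≠ 1), hd0, hd1]; ring
        rwa [hsum] at h
      have := hQ.2.add h0
      simpa using this
  -- the functions φ and ψ
  set φ : ℝ → ℝ := fun ε => -∑ j ∈ Finset.range N, f (Q j + ε * d j) with hφdef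
  set ψ : ℝ → ℝ :=
    fun ε => -∑ i ∈ Finset.range N, ∑ j ∈ Finset.range N, f (P i * (Q j + ε * d j)) with hψdef
  -- the key functional equation
  have hkey : ∀ ε ∈ Set.Ioo (-q₁) q₂, ψ ε = g x (φ ε) := by
    intro ε hε
    have h := hg P (fun j => Q j + ε * d j) hP (hQε ε hε)
    rw [hPx, eQ ε, ePQ ε] at h
    exact h
  have hφ0 : φ 0 = y := by
    rw [hφdef]
    simp only [zero_mul, add_zero]
    have e0 : ∑' j, f (Q j) = ∑ j ∈ Finset.range N, f (Q j) := by
      refine tsum_eq_sum fun j hj => ?_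
      simp only [Finset.mem_range, not_lt] at hj
      rw [hQN j hj, hf0]
    rw [← e0]
    exact hQy
  -- strict derivative of φ at 0
  have hφj : ∀ j : ℕ, HasStrictDerivAt (fun ε : ℝ => f (Q j + ε * d j))
      (deriv f (Q j) * d j) 0 := by
    intro j
    have hinner : HasStrictDerivAt (fun ε : ℝ => Q j + ε * d j) (d j) 0 := by
      simpa using ((hasStrictDerivAt_id (0:ℝ)).mul_const (d j)).const_add (Q j)
    have houter : HasStrictDerivAt f (deriv f (Q j)) (Q j + 0 * d j) := by
      simpa using hfd (Q j) (hQ.1 j)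
    exact houter.comp 0 hinner
  have hφsum : HasStrictDerivAt (fun ε : ℝ => ∑ j ∈ Finset.range N, f (Q j + ε * d j))
      (∑ j ∈ Finset.range N, deriv f (Q j) * d j) 0 :=
    HasStrictDerivAt.fun_sum fun j _ => hφj j
  have hcval : ∑ j ∈ Finset.range N, deriv f (Q j) * d j = deriv f q₁ - deriv f q₂ := by
    have h := hpair (fun j => deriv f (Q j) * d j) (fun j hj => by
      show deriv f (Q j) * d j = 0
      rw [hdge j hj, mul_zero])
    beta_reduce at h
    rw [h, hd0, hd1, hQ0, hQ1]; ring
  have hφ' : HasStrictDerivAt φ (deriv f q₂ - deriv f q₁) 0 := by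
    rw [hφdef]
    have := hφsum.fun_neg
    rw [hcval] at this
    rw [show deriv f q₂ - deriv f q₁ = -(deriv f q₁ - deriv f q₂) by ring]
    exact this
  have hc0 : deriv f q₂ - deriv f q₁ ≠ 0 := sub_ne_zero.2 (ne_of_gt hmono)
  -- strict derivative of ψ at 0
  have hψij : ∀ i j : ℕ, HasStrictDerivAt (fun ε : ℝ => f (P i * (Q j + ε * d j)))
      (deriv f (P i * Q j) * (P i * d j)) 0 := by
    intro i j
    have hinner : HasStrictDerivAt (fun ε : ℝ => P i * (Q j + ε * d j)) (P i * d j) 0 := by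
      simpa using (((hasStrictDerivAt_id (0:ℝ)).mul_const (d j)).const_add (Q j)).const_mul (P i)
    have houter : HasStrictDerivAt f (deriv f (P i * Q j)) (P i * (Q j + 0 * d j)) := by
      simpa using hfd (P i * Q j) (mul_nonneg (hP.1 i) (hQ.1 j))
    exact houter.comp 0 hinner
  have hψ' : HasStrictDerivAt ψ
      (-∑ i ∈ Finset.range N, ∑ j ∈ Finset.range N, deriv f (P i * Q j) * (P i * d j)) 0 := by
    rw [hψdef]
    exact (HasStrictDerivAt.fun_sum fun i _ =>
      HasStrictDerivAt.fun_sum fun j _ => hψij i j).fun_neg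
  -- identify the derivative of ψ
  have hψval : (-∑ i ∈ Finset.range N, ∑ j ∈ Finset.range N, deriv f (P i * Q j) * (P i * d j))
      = -∑ i ∈ Finset.range N, P i * (deriv f (P i * q₁) - deriv f (P i * q₂)) := by
    congr 1
    refine Finset.sum_congr rfl fun i _ => ?_
    have h := hpair (fun j => deriv f (P i * Q j) * (P i * d j))
      (fun j hj => by
        show deriv f (P i * Q j) * (P i * d j) = 0
        rw [hdge j hj, mul_zero, mul_zero])
    beta_reduce at h
    rw [h, hd0, hd1, hQ0, hQ1]; ring
  -- the local inverse of φ
  set inv : ℝ → ℝ := hφ'.localInverse φ (deriv f q₂ - deriv f q₁) 0 hc0 with hinvdef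
  have hE := hφ'.hasStrictFDerivAt_equiv hc0
  have hinvd : HasStrictDerivAt inv (deriv f q₂ - deriv f q₁)⁻¹ (φ 0) :=
    hφ'.to_localInverse hc0
  have hright : ∀ᶠ t in 𝓝 (φ 0), φ (inv t) = t := hE.eventually_right_inverse
  have hinv0 : inv (φ 0) = 0 := hE.localInverse_apply_image
  rw [hφ0] at hinvd hright hinv0
  -- eventual equality of g x and ψ ∘ inv near y
  have hmem : ∀ᶠ t in 𝓝 y, inv t ∈ Set.Ioo (-q₁) q₂ := by
    refine hinvd.hasDerivAt.continuousAt.eventually_mem ?_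
    rw [hinv0]
    exact Ioo_mem_nhds (by linarith) hq2pos
  have heq : (fun t => g x t) =ᶠ[𝓝 y] fun t => ψ (inv t) := by
    filter_upwards [hright, hmem] with t h1 h2
    calc g x t = g x (φ (inv t)) := by rw [h1]
      _ = ψ (inv t) := (hkey (inv t) h2).symm
  -- assemble
  have hψy : HasStrictDerivAt ψ
      (-∑ i ∈ Finset.range N, ∑ j ∈ Finset.range N, deriv f (P i * Q j) * (P i * d j))
      (inv y) := by
    rw [hinv0]; exact hψ'
  have hcomp : HasStrictDerivAt (fun t => ψ (inv t))
      ((-∑ i ∈ Finset.range N, ∑ j ∈ Finset.range N, deriv f (P i * Q j) * (P i * d j)) *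
        (deriv f q₂ - deriv f q₁)⁻¹) y := hψy.comp y hinvd
  have hfinal := hcomp.hasDerivAt.congr_of_eventuallyEq heq
  have hval : (-∑ i ∈ Finset.range N, ∑ j ∈ Finset.range N, deriv f (P i * Q j) * (P i * d j)) *
      (deriv f q₂ - deriv f q₁)⁻¹ =
      (deriv f q₁ - deriv f q₂)⁻¹ *
        ∑ i ∈ Finset.range N, P i * (deriv f (P i * q₁) - deriv f (P i * q₂)) := by
    rw [hψval, show deriv f q₂ - deriv f q₁ = -(deriv f q₁ - deriv f q₂) by ring, inv_neg]
    ring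
  rw [hval] at hfinal
  exact hfinal
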